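/- For all real x with 0 < x ≤ 7.11, we have x ≥ 10/11 + (9/11)·ln(x) + x²/11. -/

import Mathlib

open Real Set

noncomputable def fh : ℝ → ℝ := fun t => 11 * t - 10 - 9 * Real.log t - t ^ 2

lemma fh_hasDeriv {t : ℝ} (ht : 0 < t) :
    HasDerivAt fh (11 - 9 / t - 2 * t) t := by
  have h1 : HasDerivAt (fun t : ℝ => 11 * t - 10) 11 t := by
    simpa using ((hasDerivAt_id t).const_mul (11:ℝ)).sub_const 10
  have h2 : HasDerivAt (fun t : ℝ => 9 * Real.log t) (9 / t) t := by
    simpa [mul_one_div, div_eq_mul_inv] using (Real.hasDerivAt_log ht.ne').const_mul (9:ℝ)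
  have h3 : HasDerivAt (fun t : ℝ => t ^ 2) (2 * t) t := by
    simpa using hasDerivAt_pow 2 t
  exact (h1.sub h2).sub h3

lemma fh_cont {s : Set ℝ} (hs : ∀ t ∈ s, 0 < t) : ContinuousOn fh s :=
  fun t ht => ((fh_hasDeriv (hs t ht)).continuousAt).continuousWithinAt

lemma fh_deriv {t : ℝ} (ht : 0 < t) : deriv fh t = 11 - 9 / t - 2 * t :=
  (fh_hasDeriv ht).deriv

lemma log_711 : Real.log 7.11 ≤ 1.9619 := by
  rw [Real.log_le_iff_le_exp (by norm_num)]
  have h1 : Real.exp 1.9619 = Real.exp 1 * Real.exp 0.9619 := by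
    rw [← Real.exp_add]; norm_num
  have h2 : (2.7182818283 : ℝ) < Real.exp 1 := Real.exp_one_gt_d9
  have h3 : ∑ i ∈ Finset.range 7, (0.9619 : ℝ) ^ i / i.factorial ≤ Real.exp 0.9619 :=
    Real.sum_le_exp_of_nonneg (by norm_num) 7
  have h4 : (2.6164 : ℝ) ≤ Real.exp 0.9619 := by
    refine le_trans ?_ h3
    norm_num [Finset.sum_range_succ, Nat.factorial]
  nlinarith [Real.exp_pos (0.9619 : ℝ)]

lemma fh_nonneg {x : ℝ} (hx : 0 < x) (hx' : x ≤ 7.11) : 0 ≤ fh x := by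
  have h1 : fh 1 = 0 := by simp [fh]; norm_num
  rcases le_or_gt x 1 with h | h
  · -- antitone on [x, 1]
    have hanti : AntitoneOn fh (Icc x 1) := by
      apply antitoneOn_of_deriv_nonpos (convex_Icc _ _)
        (fh_cont (fun t ht => lt_of_lt_of_le hx ht.1))
      · intro t ht
        rw [interior_Icc] at ht
        exact (fh_hasDeriv (hx.trans ht.1)).differentiableAt.differentiableWithinAt
      · intro t ht
        rw [interior_Icc] at ht
        have htpos : 0 < t := hx.trans ht.1
        rw [fh_deriv htpos]
        have h5 : (11 - 2 * t) * t ≤ 9 := by nlinarith [ht.2.le]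
        have h6 : 11 - 2 * t ≤ 9 / t := (le_div_iff₀ htpos).2 h5
        linarith
    have := hanti (left_mem_Icc.2 h) (right_mem_Icc.2 h) h
    rw [h1] at this; exact this
  · rcases le_or_gt x 4.5 with h2 | h2
    · have hmono : MonotoneOn fh (Icc 1 x) := by
        apply monotoneOn_of_deriv_nonneg (convex_Icc _ _)
          (fh_cont (fun t ht => lt_of_lt_of_le one_pos ht.1))
        · intro t ht
          rw [interior_Icc] at ht
          exact (fh_hasDeriv (lt_trans one_pos ht.1)).differentiableAt.differentiableWithinAt
        · intro t ht
          rw [interior_Icc] at ht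
          have htpos : 0 < t := lt_trans one_pos ht.1
          rw [fh_deriv htpos]
          have ht45 : t ≤ 4.5 := le_trans ht.2.le h2
          have h5 : 9 ≤ (11 - 2 * t) * t := by nlinarith [ht.1.le]
          have h6 : 9 / t ≤ 11 - 2 * t := (div_le_iff₀ htpos).2 h5
          linarith
      have := hmono (left_mem_Icc.2 h.le) (right_mem_Icc.2 h.le) h.le
      rw [h1] at this; exact this
    · have hanti : AntitoneOn fh (Icc x 7.11) := by
        apply antitoneOn_of_deriv_nonpos (convex_Icc _ _)
          (fh_cont (fun t ht => lt_of_lt_of_le hx ht.1))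
        · intro t ht
          rw [interior_Icc] at ht
          exact (fh_hasDeriv (hx.trans ht.1)).differentiableAt.differentiableWithinAt
        · intro t ht
          rw [interior_Icc] at ht
          have htpos : 0 < t := hx.trans ht.1
          rw [fh_deriv htpos]
          have ht45 : 4.5 < t := lt_trans h2 ht.1
          have h5 : (11 - 2 * t) * t ≤ 9 := by nlinarith
          have h6 : 11 - 2 * t ≤ 9 / t := (le_div_iff₀ htpos).2 h5
          linarith
      have := hanti (left_mem_Icc.2 hx') (right_mem_Icc.2 hx') hx'
      have hf7 : 0 ≤ fh 7.11 := by
        have := log_711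
        simp only [fh]
        nlinarith
      linarith

theorem stmt_0 (x : ℝ) (hx : 0 < x) (hx' : x ≤ 7.11) :
    x ≥ 10 / 11 + (9 / 11) * Real.log x + x ^ 2 / 11 := by
  have h := fh_nonneg hx hx'
  simp only [fh] at h
  linarith
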